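/- Let H be a real inner product space, f : H → H contractive, and suppose ‖f(z) - f(y)‖ ≤ L·‖z - y‖ for all z, y. Consider the implicit midpoint rule with exact stage z⁽¹⁾ = zₙ + (Δt/2)·f(z⁽¹⁾), z_{n+1} = zₙ + Δt·f(z⁽¹⁾), and the perturbed stage y⁽¹⁾ = yₙ + (Δt/2)·f_ε(y⁽¹⁾), y_{n+1} = yₙ + Δt·f(y⁽¹⁾), where ‖f(y⁽¹⁾) - f_ε(y⁽¹⁾)‖ ≤ ε₁. Then ‖z⁽¹⁾ - y⁽¹⁾‖ ≤ ‖zₙ - yₙ‖ + (Δt/2)·ε₁. -/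

import Mathlib

open scoped RealInnerProductSpace

theorem imr_stage_error_bound
    {H : Type*} [NormedAddCommGroup H] [InnerProductSpace ℝ H]
    (f fε : H → H) (hf : ∀ x y : H, ⟪x - y, f x - f y⟫ ≤ 0)
    (L : ℝ) (hLip : ∀ z y : H, ‖f z - f y‖ ≤ L * ‖z - y‖)
    (Δt : ℝ) (hΔt : 0 < Δt) (ε₁ : ℝ)
    (zn yn z1 y1 zn1 yn1 : H)
    (hz1 : z1 = zn + (Δt / 2) • f z1)
    (hzn1 : zn1 = zn + Δt • f z1)
    (hy1 : y1 = yn + (Δt / 2) • fε y1)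
    (hyn1 : yn1 = yn + Δt • f y1)
    (hε : ‖f y1 - fε y1‖ ≤ ε₁) :
    ‖z1 - y1‖ ≤ ‖zn - yn‖ + (Δt / 2) * ε₁ := by
  set d := z1 - y1 with hd
  have hdec : d = (zn - yn) + (Δt/2) • (f z1 - f y1) + (Δt/2) • (f y1 - fε y1) := by
    rw [hd]; nth_rewrite 1 [hz1, hy1]; module
  have key : ⟪d, d⟫ = ⟪d, zn - yn⟫ + (Δt/2) * ⟪d, f z1 - f y1⟫
      + (Δt/2) * ⟪d, f y1 - fε y1⟫ := by
    nth_rewrite 2 [hdec]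
    rw [inner_add_right, inner_add_right, real_inner_smul_right, real_inner_smul_right]
  have h1 : ⟪d, f z1 - f y1⟫ ≤ 0 := hf z1 y1
  have h2 : ⟪d, zn - yn⟫ ≤ ‖d‖ * ‖zn - yn‖ := real_inner_le_norm _ _
  have hε0 : 0 ≤ ε₁ := le_trans (norm_nonneg _) hε
  have h3 : ⟪d, f y1 - fε y1⟫ ≤ ‖d‖ * ε₁ := by
    refine le_trans (real_inner_le_norm _ _) ?_
    exact mul_le_mul_of_nonneg_left hε (norm_nonneg d)
  have hsq : ‖d‖ ^ 2 ≤ ‖d‖ * (‖zn - yn‖ + (Δt/2) * ε₁) := by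
    rw [← real_inner_self_eq_norm_sq, key]
    nlinarith [norm_nonneg d, h1, h2, h3, hΔt.le]
  rcases eq_or_lt_of_le (norm_nonneg d) with h0 | h0
  · rw [← h0]
    positivity
  · have := (mul_le_mul_iff_right₀ h0).mp (by nlinarith : ‖d‖ * ‖d‖ ≤ ‖d‖ * (‖zn - yn‖ + (Δt/2) * ε₁))
    exact this
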